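/- Let k be a field, Q = k[x₁,...,xₙ], and I a homogeneous Gorenstein ideal with (x₁,...,xₙ)⁴ ⊆ I ⊆ (x₁,...,xₙ)². If the class of x₁ in Q/I has rank one and x₁² ∉ I, then after a linear change of variables x₁x₂,...,x₁xₙ ∈ I and the dual generator of I has the form F = X₁^{[3]} + G(X₂,...,Xₙ) for some cubic form G. -/

import Mathlib

open MvPolynomial

/-- Contraction action of the polynomial ring on the divided power algebra,
recorded in divided power coordinates: `x^s ∘ X^{[t]} = X^{[t−s]}` if `s ≤ t`,
and `0` otherwise, extended bilinearly. -/
noncomputable def contract {σ : Type*} {k : Type*} [CommSemiring k]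
    (q F : MvPolynomial σ k) : MvPolynomial σ k :=
  letI := Classical.decEq σ
  letI : DecidablePred fun p : (σ →₀ ℕ) × (σ →₀ ℕ) => p.1 ≤ p.2 := fun _ => Classical.dec _
  ∑ s ∈ q.support, ∑ t ∈ F.support,
    if s ≤ t then MvPolynomial.monomial (t - s) (q.coeff s * F.coeff t) else 0

section API
variable {σ : Type*} {k : Type*} [CommRing k]

lemma coeff_contract (q F : MvPolynomial σ k) (u : σ →₀ ℕ) :
    coeff u (contract q F) = ∑ s ∈ q.support, coeff s q * coeff (s + u) F := by
  classical
  unfold contract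
  rw [coeff_sum]
  refine Finset.sum_congr rfl fun s _ => ?_
  rw [coeff_sum]
  have : ∀ t ∈ F.support,
      coeff u (if s ≤ t then (monomial (t - s)) (q.coeff s * F.coeff t) else 0)
      = if t = s + u then coeff s q * coeff t F else 0 := by
    intro t _
    split_ifs with h h2 h3
    · subst h2
      simp [coeff_monomial, add_tsub_cancel_left]
    · rw [coeff_monomial, if_neg]
      intro he
      exact h2 (by rw [← he, add_tsub_cancel_of_le h])
    · exact absurd (h3 ▸ le_add_right le_rfl : s ≤ t) h
    · simp
  rw [Finset.sum_congr rfl this, Finset.sum_ite_eq' F.support (s + u)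
    (fun t => coeff s q * coeff t F)]
  split_ifs with h
  · rfl
  · rw [notMem_support_iff.mp h, mul_zero]

lemma coeff_contract_superset (q F : MvPolynomial σ k) (u : σ →₀ ℕ)
    (S : Finset (σ →₀ ℕ)) (hS : q.support ⊆ S) :
    coeff u (contract q F) = ∑ s ∈ S, coeff s q * coeff (s + u) F := by
  rw [coeff_contract]
  exact Finset.sum_subset hS fun s _ hs => by
    rw [notMem_support_iff.mp hs, zero_mul]

lemma contract_add_left (a b F : MvPolynomial σ k) :
    contract (a + b) F = contract a F + contract b F := by
  classical
  ext u
  rw [coeff_add, coeff_contract_superset (a + b) F u (a.support ∪ b.support)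
      (support_add),
    coeff_contract_superset a F u (a.support ∪ b.support) Finset.subset_union_left,
    coeff_contract_superset b F u (a.support ∪ b.support) Finset.subset_union_right,
    ← Finset.sum_add_distrib]
  exact Finset.sum_congr rfl fun s _ => by rw [coeff_add, add_mul]

lemma contract_monomial_left (w : σ →₀ ℕ) (c : k) (F : MvPolynomial σ k) (u : σ →₀ ℕ) :
    coeff u (contract (monomial w c) F) = c * coeff (w + u) F := by
  classical
  rw [coeff_contract_superset _ F u {w} support_monomial_subset,
    Finset.sum_singleton, coeff_monomial, if_pos rfl]

lemma contract_zero_right (q : MvPolynomial σ k) : contract q (0 : MvPolynomial σ k) = 0 := by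
  ext u; simp [coeff_contract]

lemma contract_smul_right (c : k) (q F : MvPolynomial σ k) :
    contract q (c • F) = c • contract q F := by
  ext u
  rw [coeff_smul, coeff_contract, coeff_contract, smul_eq_mul, Finset.mul_sum]
  exact Finset.sum_congr rfl fun s _ => by rw [coeff_smul, smul_eq_mul]; ring

lemma contract_add_right (q a b : MvPolynomial σ k) :
    contract q (a + b) = contract q a + contract q b := by
  ext u
  rw [coeff_add, coeff_contract, coeff_contract, coeff_contract, ← Finset.sum_add_distrib]
  exact Finset.sum_congr rfl fun s _ => by rw [coeff_add, mul_add]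

lemma contract_mul (p q F : MvPolynomial σ k) :
    contract (p * q) F = contract p (contract q F) := by
  classical
  induction p using MvPolynomial.induction_on' with
  | add a b ha hb => rw [add_mul, contract_add_left, contract_add_left, ha, hb]
  | monomial w c =>
    induction q using MvPolynomial.induction_on' with
    | add a b ha hb =>
      rw [mul_add, contract_add_left, ha, hb, contract_add_left, contract_add_right]
    | monomial w' c' =>
      ext u
      rw [monomial_mul, contract_monomial_left, contract_monomial_left,
        contract_monomial_left]
      ring_nf
      rw [add_comm w w', add_assoc]

/-- The pairing `⟨q, F⟩`: constant coefficient of `contract q F`. -/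
noncomputable def mpair (q F : MvPolynomial σ k) : k := coeff 0 (contract q F)

lemma mpair_eq_sum (q F : MvPolynomial σ k) :
    mpair q F = ∑ s ∈ q.support, coeff s q * coeff s F := by
  rw [mpair, coeff_contract]
  exact Finset.sum_congr rfl fun s _ => by rw [add_zero]

lemma contract_eq_zero_iff (q F : MvPolynomial σ k) :
    contract q F = 0 ↔ ∀ p, mpair (p * q) F = 0 := by
  constructor
  · intro h p
    rw [mpair, contract_mul, h, contract_zero_right, coeff_zero]
  · intro h
    ext u
    have := h (monomial u 1)
    rw [mpair, contract_mul, contract_monomial_left, add_zero, one_mul] at this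
    rw [this, coeff_zero]

lemma mpair_homog_ne (g F : MvPolynomial σ k) {m d : ℕ}
    (hg : g.IsHomogeneous m) (hF : F.IsHomogeneous d) (hmd : m ≠ d) :
    mpair g F = 0 := by
  rw [mpair_eq_sum]
  refine Finset.sum_eq_zero fun s hs => ?_
  rw [hF.coeff_eq_zero (fun hd => hmd (by
    rw [Finsupp.degree_eq_weight_one] at hd
    exact (hg (mem_support_iff.mp hs)).symm.trans hd)), mul_zero]

lemma mpair_add_left (a b F : MvPolynomial σ k) :
    mpair (a + b) F = mpair a F + mpair b F := by
  rw [mpair, mpair, mpair, contract_add_left, coeff_add]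

lemma mpair_monomial (s : σ →₀ ℕ) (c : k) (F : MvPolynomial σ k) :
    mpair (monomial s c) F = c * coeff s F := by
  rw [mpair, contract_monomial_left, add_zero]
end API

section API2
variable {σ : Type*} {k : Type*} [CommRing k]

lemma contract_smul_left (c : k) (q F : MvPolynomial σ k) :
    contract (c • q) F = c • contract q F := by
  classical
  ext u
  rw [coeff_smul, coeff_contract_superset (c • q) F u q.support (support_smul),
    coeff_contract, smul_eq_mul, Finset.mul_sum]
  exact Finset.sum_congr rfl fun s _ => by rw [coeff_smul, smul_eq_mul]; ring

lemma mpair_smul_left (c : k) (q F : MvPolynomial σ k) :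
    mpair (c • q) F = c * mpair q F := by
  rw [mpair, mpair, contract_smul_left, coeff_smul, smul_eq_mul]

end API2

section API3
variable {n : ℕ} {k : Type*} [CommRing k]

lemma degree_eq_univ_sum (t : Fin n →₀ ℕ) : Finsupp.degree t = ∑ i, t i := by
  rw [Finsupp.degree]
  exact Finset.sum_subset (Finset.subset_univ _)
    (fun i _ hi => Finsupp.notMem_support_iff.mp hi)

/-- degree-3 exponents -/
noncomputable def T3 (n : ℕ) : Finset (Fin n →₀ ℕ) := Finset.finsuppAntidiag Finset.univ 3

lemma mem_T3 {t : Fin n →₀ ℕ} : t ∈ T3 n ↔ Finsupp.degree t = 3 := by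
  rw [T3, Finset.mem_finsuppAntidiag, degree_eq_univ_sum]
  exact ⟨fun h => h.1, fun h => ⟨h, Finset.subset_univ _⟩⟩

/-- The contragredient dual generator. -/
noncomputable def dualT (φ : MvPolynomial (Fin n) k →ₐ[k] MvPolynomial (Fin n) k)
    (F : MvPolynomial (Fin n) k) : MvPolynomial (Fin n) k :=
  ∑ t ∈ T3 n, monomial t (mpair (φ (monomial t 1)) F)

lemma coeff_dualT (φ : MvPolynomial (Fin n) k →ₐ[k] MvPolynomial (Fin n) k)
    (F : MvPolynomial (Fin n) k) (s : Fin n →₀ ℕ) :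
    coeff s (dualT φ F) = if s ∈ T3 n then mpair (φ (monomial s 1)) F else 0 := by
  classical
  rw [dualT, coeff_sum]
  rw [Finset.sum_congr rfl (fun t _ => coeff_monomial s t _),
    Finset.sum_ite_eq' (T3 n) s (fun t => mpair (φ (monomial t 1)) F)]

lemma isHomogeneous_dualT (φ : MvPolynomial (Fin n) k →ₐ[k] MvPolynomial (Fin n) k)
    (F : MvPolynomial (Fin n) k) : (dualT φ F).IsHomogeneous 3 :=
  IsHomogeneous.sum _ _ _ fun t ht =>
    isHomogeneous_monomial _ (mem_T3.mp ht)

lemma mpair_dualT (φ : MvPolynomial (Fin n) k →ₐ[k] MvPolynomial (Fin n) k)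
    (hφ : ∀ i, (φ (X i)).IsHomogeneous 1)
    (F : MvPolynomial (Fin n) k) (hF : F.IsHomogeneous 3)
    (q : MvPolynomial (Fin n) k) :
    mpair q (dualT φ F) = mpair (φ q) F := by
  classical
  induction q using MvPolynomial.induction_on' with
  | add a b ha hb => rw [mpair_add_left, map_add, mpair_add_left, ha, hb]
  | monomial s c =>
    have hsm : (monomial s c : MvPolynomial (Fin n) k) = c • monomial s 1 := by
      rw [smul_monomial, smul_eq_mul, mul_one]
    rw [mpair_monomial, coeff_dualT, hsm, map_smul, mpair_smul_left]
    split_ifs with h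
    · rfl
    · have hhom : (φ (monomial s 1)).IsHomogeneous (1 * Finsupp.degree s) := by
        have h1 : (monomial s (1:k)).IsHomogeneous (Finsupp.degree s) :=
          isHomogeneous_monomial _ rfl
        have := MvPolynomial.aeval_unique φ
        rw [this]
        exact h1.aeval _ hφ
      rw [mpair_homog_ne _ _ hhom hF (by rw [one_mul]; exact fun hd => h (mem_T3.mpr hd)),
        mul_zero]
end API3

section HELP
variable {n : ℕ} {k : Type*} [CommRing k]

lemma degree_add' (a b : Fin n →₀ ℕ) :
    Finsupp.degree (a + b) = Finsupp.degree a + Finsupp.degree b := by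
  rw [degree_eq_univ_sum, degree_eq_univ_sum, degree_eq_univ_sum, ← Finset.sum_add_distrib]
  rfl

lemma degree_single' (e : Fin n) (m : ℕ) : Finsupp.degree (Finsupp.single e m) = m := by
  rw [degree_eq_univ_sum]
  rw [Finset.sum_eq_single_of_mem e (Finset.mem_univ e)
    (fun i _ hi => Finsupp.single_eq_of_ne' (Ne.symm hi)), Finsupp.single_eq_same]

lemma mem_map_algEquiv {A : Type*} [CommRing A] [Algebra k A]
    (ψ : A ≃ₐ[k] A) (I : Ideal A) (q : A) : q ∈ I.map ψ ↔ ψ.symm q ∈ I := by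
  constructor
  · intro h
    have hle : I.map ψ ≤ I.comap ψ.symm := by
      rw [Ideal.map_le_iff_le_comap]
      intro x hx
      rw [Ideal.mem_comap, Ideal.mem_comap]
      simpa using hx
    exact (Ideal.mem_comap).mp (hle h)
  · intro h
    have := Ideal.mem_map_of_mem ψ h
    rwa [AlgEquiv.apply_symm_apply] at this

lemma single_add_single_le {e j : Fin n} (hje : j ≠ e) {m : Fin n →₀ ℕ}
    (h1 : 1 ≤ m e) (h2 : 1 ≤ m j) :
    Finsupp.single e 1 + Finsupp.single j 1 ≤ m := by
  rw [Finsupp.le_def]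
  intro i
  rw [Finsupp.add_apply, Finsupp.single_apply, Finsupp.single_apply]
  rcases eq_or_ne e i with rfl | h3
  · rw [if_pos rfl, if_neg (fun h : j = e => hje h)]
    omega
  · rw [if_neg h3]
    rcases eq_or_ne j i with rfl | h4
    · rw [if_pos rfl]
      omega
    · rw [if_neg h4]
      omega
end HELP

/-- Proposition 3.1, case (2): if the class of `x₁` in `Q/I` is a rank-one
linear form and `x₁² ∉ I`, then after a linear change of variables `I` contains
`x₁x₂, …, x₁xₙ` and the dual generator can be written as `F = X₁^{[3]} + G(X₂,…,Xₙ)`. -/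
theorem stmt_5 (k : Type*) [Field k] (n : ℕ) (hn : 0 < n)
    (I : Ideal (MvPolynomial (Fin n) k))
    -- `I` is homogeneous
    (hIhom : ∀ p ∈ I, ∀ d : ℕ, homogeneousComponent d p ∈ I)
    -- `m⁴ ⊆ I ⊆ m²`
    (hm4 : (Ideal.span (Set.range X)) ^ 4 ≤ I)
    (hm2 : I ≤ (Ideal.span (Set.range X)) ^ 2)
    -- `I` is Gorenstein with dual generator the cubic `F` (Macaulay duality)
    (F : MvPolynomial (Fin n) k) (hF : F.IsHomogeneous 3)
    (hann : ∀ q, q ∈ I ↔ contract q F = 0)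
    -- the class of `x₁` in `Q/I` is a linear form of rank one:
    -- multiplication by `x₁` from `(Q/I)₁` to `(Q/I)₂` has rank one
    (hrank : Module.finrank k
      (LinearMap.range
        ((Ideal.Quotient.mkₐ k I).toLinearMap ∘ₗ
          LinearMap.mulLeft k (X (⟨0, hn⟩ : Fin n)) ∘ₗ
          (∑ i : Fin n, (LinearMap.proj i : (Fin n → k) →ₗ[k] k).smulRight (X i)))) = 1)
    -- `x₁² ∉ I`
    (hx1 : (X (⟨0, hn⟩ : Fin n)) ^ 2 ∉ I) :
    ∃ ψ : MvPolynomial (Fin n) k ≃ₐ[k] MvPolynomial (Fin n) k,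
      (∀ i, (ψ (X i)).IsHomogeneous 1) ∧
      (∀ j : Fin n, j ≠ ⟨0, hn⟩ → X (⟨0, hn⟩ : Fin n) * X j ∈ I.map ψ) ∧
      ∃ G : MvPolynomial (Fin n) k, G.IsHomogeneous 3 ∧
        (∀ m ∈ G.support, m ⟨0, hn⟩ = 0) ∧
        (∀ q, q ∈ I.map ψ ↔
          contract q (monomial (Finsupp.single (⟨0, hn⟩ : Fin n) 3) 1 + G) = 0) := by
  classical
  set e : Fin n := ⟨0, hn⟩ with he
  set L := ((Ideal.Quotient.mkₐ k I).toLinearMap ∘ₗ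
          LinearMap.mulLeft k (X e) ∘ₗ
          (∑ i : Fin n, (LinearMap.proj i : (Fin n → k) →ₗ[k] k).smulRight (X i))) with hL
  -- computation of L on basis vectors
  have hLj : ∀ j : Fin n, L (Pi.single j 1) = Ideal.Quotient.mk I (X e * X j) := by
    intro j
    rw [hL]
    simp only [LinearMap.coe_comp, Function.comp_apply, LinearMap.sum_apply,
      LinearMap.smulRight_apply, LinearMap.proj_apply]
    rw [Finset.sum_eq_single_of_mem j (Finset.mem_univ j)
      (fun i _ hi => by rw [Pi.single_eq_of_ne hi, zero_smul])]
    rw [Pi.single_eq_same, one_smul]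
    rfl
  -- extract coefficients c j
  have hc : ∀ j : Fin n, ∃ cj : k,
      (j ≠ e → X e * X j - C cj * (X e * X e) ∈ I) ∧ (j = e → cj = 0) := by
    intro j
    by_cases hj : j = e
    · exact ⟨0, fun h => absurd hj h, fun _ => rfl⟩
    · have hv : (Ideal.Quotient.mk I) (X e * X e) ≠ 0 := by
        rw [Ne, Ideal.Quotient.eq_zero_iff_mem, ← sq]
        exact hx1
      set V := LinearMap.range L
      have hvmem : (Ideal.Quotient.mk I) (X e * X e) ∈ V := ⟨Pi.single e 1, hLj e⟩
      have hwmem : (Ideal.Quotient.mk I) (X e * X j) ∈ V := ⟨Pi.single j 1, hLj j⟩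
      have hv' : (⟨_, hvmem⟩ : V) ≠ 0 := fun h => hv (congrArg Subtype.val h)
      obtain ⟨cj, hcj⟩ := (finrank_eq_one_iff_of_nonzero' (⟨_, hvmem⟩ : V) hv').mp
        hrank ⟨_, hwmem⟩
      refine ⟨cj, fun _ => ?_, fun h => absurd h hj⟩
      have hval : cj • (Ideal.Quotient.mk I) (X e * X e)
          = (Ideal.Quotient.mk I) (X e * X j) := congrArg Subtype.val hcj
      have hval2 : (Ideal.Quotient.mk I) (cj • (X e * X e))
          = (Ideal.Quotient.mk I) (X e * X j) := by
        rw [← Ideal.Quotient.mkₐ_eq_mk (R₁ := k), map_smul, Ideal.Quotient.mkₐ_eq_mk, hval]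
      have : (Ideal.Quotient.mk I) (X e * X j - cj • (X e * X e)) = 0 := by
        rw [map_sub, hval2, sub_self]
      rw [Ideal.Quotient.eq_zero_iff_mem] at this
      rwa [smul_eq_C_mul] at this
  choose c hcmem hce using hc
  have hce' : c e = 0 := hce e rfl
  -- build the change of variables
  set fwd : MvPolynomial (Fin n) k →ₐ[k] MvPolynomial (Fin n) k :=
    aeval (fun i => X i + C (c i) * X e) with hfwd
  set bwd : MvPolynomial (Fin n) k →ₐ[k] MvPolynomial (Fin n) k :=
    aeval (fun i => X i - C (c i) * X e) with hbwd
  have hcomp1 : fwd.comp bwd = AlgHom.id k _ := by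
    apply MvPolynomial.algHom_ext
    intro i
    simp only [AlgHom.comp_apply, hfwd, hbwd, aeval_X, map_sub, map_mul, map_add, aeval_C,
      AlgHom.id_apply, algebraMap_eq, hce', map_zero, zero_mul, add_zero]
    ring
  have hcomp2 : bwd.comp fwd = AlgHom.id k _ := by
    apply MvPolynomial.algHom_ext
    intro i
    simp only [AlgHom.comp_apply, hfwd, hbwd, aeval_X, map_sub, map_mul, map_add, aeval_C,
      AlgHom.id_apply, algebraMap_eq, hce', map_zero, zero_mul, add_zero]
    ring
  set ψ : MvPolynomial (Fin n) k ≃ₐ[k] MvPolynomial (Fin n) k :=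
    AlgEquiv.ofAlgHom fwd bwd hcomp1 hcomp2 with hψ
  have hψX : ∀ i, ψ (X i) = X i + C (c i) * X e := fun i => by
    show fwd (X i) = _
    rw [hfwd, aeval_X]
  have hψsymmX : ∀ i, ψ.symm (X i) = X i - C (c i) * X e := fun i => by
    show bwd (X i) = _
    rw [hbwd, aeval_X]
  have hψhom : ∀ i, (ψ (X i)).IsHomogeneous 1 := fun i => by
    rw [hψX]
    exact (isHomogeneous_X k i).add ((isHomogeneous_X k e).C_mul (c i))
  have hψsymmhom : ∀ i, (ψ.symm (X i)).IsHomogeneous 1 := fun i => by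
    rw [hψsymmX]
    exact (isHomogeneous_X k i).sub ((isHomogeneous_X k e).C_mul (c i))
  -- x_e x_j ∈ I.map ψ
  have hmemmap : ∀ j : Fin n, j ≠ e → X e * X j ∈ I.map ψ := by
    intro j hj
    have h1 := Ideal.mem_map_of_mem ψ (hcmem j hj)
    have h2 : ψ (X e * X j - C (c j) * (X e * X e)) = X e * X j := by
      rw [map_sub, map_mul, map_mul, map_mul,
        show ψ (C (c j)) = C (c j) from by
          rw [show (C (c j) : MvPolynomial (Fin n) k) = algebraMap k _ (c j) from rfl]
          exact AlgEquiv.commutes ψ (c j),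
        hψX e, hψX j, hce', map_zero, zero_mul, add_zero]
      ring
    rwa [h2] at h1
  -- the transferred dual generator
  set F2 : MvPolynomial (Fin n) k := dualT ψ.symm.toAlgHom F with hF2
  have hdual : ∀ q, mpair q F2 = mpair (ψ.symm q) F := fun q =>
    mpair_dualT ψ.symm.toAlgHom hψsymmhom F hF q
  have hJ : ∀ q, q ∈ I.map ψ ↔ contract q F2 = 0 := by
    intro q
    rw [mem_map_algEquiv, hann, contract_eq_zero_iff, contract_eq_zero_iff]
    constructor
    · intro h p
      rw [hdual, map_mul]
      exact h (ψ.symm p)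
    · intro h p
      have h2 := h (ψ p)
      rwa [hdual, map_mul, AlgEquiv.symm_apply_apply] at h2
  -- vanishing of coefficients above x_e x_j
  have hvanish : ∀ j, j ≠ e → ∀ m : Fin n →₀ ℕ,
      Finsupp.single e 1 + Finsupp.single j 1 ≤ m → coeff m F2 = 0 := by
    intro j hj m hle
    have h0 : contract (X e * X j) F2 = 0 := (hJ _).mp (hmemmap j hj)
    have h2 := congrArg (coeff (m - (Finsupp.single e 1 + Finsupp.single j 1))) h0
    rw [coeff_zero, show (X e * X j : MvPolynomial (Fin n) k)
        = monomial (Finsupp.single e 1 + Finsupp.single j 1) 1 from by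
          rw [X, X, monomial_mul, one_mul],
      contract_monomial_left, one_mul, add_tsub_cancel_of_le hle] at h2
    exact h2
  -- the coefficient of X_e^[3] is nonzero
  have ha : coeff (Finsupp.single e 3) F2 ≠ 0 := by
    have hx2 : X e ^ 2 ∉ I.map ψ := by
      rw [mem_map_algEquiv, map_pow, hψsymmX e, hce', map_zero, zero_mul, sub_zero]
      exact hx1
    have hcon : contract (X e ^ 2) F2 ≠ 0 := fun h => hx2 ((hJ _).mpr h)
    obtain ⟨u, hu⟩ := ne_zero_iff.mp hcon
    rw [X_pow_eq_monomial, contract_monomial_left, one_mul] at hu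
    have hm3 : Finsupp.single e 2 + u ∈ T3 n := by
      by_contra hm
      rw [hF2, coeff_dualT, if_neg hm] at hu
      exact hu rfl
    have hdeg : Finsupp.degree (Finsupp.single e 2 + u) = 3 := mem_T3.mp hm3
    have husupp : u.support ⊆ {e} := by
      intro j hjs
      rw [Finset.mem_singleton]
      by_contra hj
      apply hu
      apply hvanish j (fun h => hj h) _
      apply single_add_single_le (fun h => hj h)
      · rw [Finsupp.add_apply, Finsupp.single_eq_same]
        omega
      · rw [Finsupp.add_apply, Finsupp.single_eq_of_ne' (fun h : e = j => hj h.symm), zero_add]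
        exact Nat.one_le_iff_ne_zero.mpr (Finsupp.mem_support_iff.mp hjs)
    have hu1 : u = Finsupp.single e (u e) := Finsupp.support_subset_singleton.mp husupp
    have hdu : 2 + Finsupp.degree u = 3 := by
      rw [← degree_single' e 2, ← degree_add']
      exact hdeg
    have hue : u e = 1 := by
      rw [hu1, degree_single'] at hdu
      omega
    rw [hu1, hue, ← Finsupp.single_add] at hu
    exact hu
  refine ⟨ψ, hψhom, hmemmap,
    C (coeff (Finsupp.single e 3) F2)⁻¹ * F2 - monomial (Finsupp.single e 3) 1, ?_, ?_, ?_⟩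
  · exact ((isHomogeneous_dualT _ _).C_mul _).sub
      (isHomogeneous_monomial _ (degree_single' e 3))
  · intro m hm
    by_contra hme
    have hcm := mem_support_iff.mp hm
    rw [coeff_sub, coeff_C_mul, coeff_monomial] at hcm
    by_cases hms : m = Finsupp.single e 3
    · subst hms
      rw [if_pos rfl, inv_mul_cancel₀ ha, sub_self] at hcm
      exact hcm rfl
    · rw [if_neg (fun h => hms h.symm), sub_zero] at hcm
      have hF2m : coeff m F2 ≠ 0 := fun h => hcm (by rw [h, mul_zero])
      have hm3 : m ∈ T3 n := by
        by_contra hmm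
        exact hF2m (by rw [hF2, coeff_dualT, if_neg hmm])
      have hdeg : Finsupp.degree m = 3 := mem_T3.mp hm3
      have hj : ∃ j, j ≠ e ∧ m j ≠ 0 := by
        by_contra hno
        push_neg at hno
        have hsup : m.support ⊆ {e} := by
          intro j hjs
          rw [Finset.mem_singleton]
          by_contra hje
          exact Finsupp.mem_support_iff.mp hjs (hno j hje)
        have hm1 : m = Finsupp.single e (m e) := Finsupp.support_subset_singleton.mp hsup
        rw [hm1, degree_single'] at hdeg
        exact hms (by rw [hm1, hdeg])
      obtain ⟨j, hje, hmj⟩ := hj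
      apply hF2m
      apply hvanish j hje m
      apply single_add_single_le hje
      · omega
      · exact Nat.one_le_iff_ne_zero.mpr hmj
  · intro q
    have hsum : monomial (Finsupp.single e 3) (1:k)
        + (C (coeff (Finsupp.single e 3) F2)⁻¹ * F2 - monomial (Finsupp.single e 3) 1)
        = (coeff (Finsupp.single e 3) F2)⁻¹ • F2 := by
      rw [smul_eq_C_mul]
      ring
    rw [hJ q, hsum, contract_smul_right]
    constructor
    · intro h
      rw [h, smul_zero]
    · intro h
      rcases smul_eq_zero.mp h with h1 | h1
      · exact absurd h1 (inv_ne_zero ha)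
      · exact h1
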